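/- Moments of derivatives of the GARCH quasi-log-likelihood (Lemma A.8 of the paper, conditional form): Assume that for every real d ≥ 1 and all coordinate indices i, j, the following expectations are finite: E[ sup_{θ∈N} (X²/S(θ))^d ], E[ sup_{θ∈N} |(∂S/∂θ_i)(θ)/S(θ)|^d ], and E[ sup_{θ∈N} |(∂²S/∂θ_i∂θ_j)(θ)/S(θ)|^d ]. Then for every real d ≥ 1 and all i, j, E[ sup_{θ∈N} |(∂l/∂θ_i)(θ)|^d ] < ∞ and E[ sup_{θ∈N} |(∂²l/∂θ_i∂θ_j)(θ)|^d ] < ∞. -/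

import Mathlib

open MeasureTheory ProbabilityTheory Topology Filter
open scoped ENNReal NNReal

namespace Stmt10Aux

lemma rpow_two_mul {x d : ℝ} (hx : 0 ≤ x) : x ^ (2*d) = x ^ d * x ^ d := by
  rw [mul_comm (2:ℝ) d, Real.rpow_mul hx, show ((2:ℝ)) = ((2:ℕ):ℝ) by norm_num,
    Real.rpow_natCast]
  ring

lemma rpow_three_mul {x d : ℝ} (hx : 0 ≤ x) : x ^ (3*d) = x ^ d * x ^ d * x ^ d := by
  rw [mul_comm (3:ℝ) d, Real.rpow_mul hx, show ((3:ℝ)) = ((3:ℕ):ℝ) by norm_num,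
    Real.rpow_natCast]
  ring

lemma prod2_le {x y d : ℝ} (hx : 0 ≤ x) (hy : 0 ≤ y) :
    x ^ d * y ^ d ≤ x ^ (2*d) + y ^ (2*d) := by
  rw [rpow_two_mul hx, rpow_two_mul hy]
  nlinarith [Real.rpow_nonneg hx d, Real.rpow_nonneg hy d, sq_nonneg (x^d - y^d)]

lemma prod3_le {x y z d : ℝ} (hx : 0 ≤ x) (hy : 0 ≤ y) (hz : 0 ≤ z) :
    x ^ d * y ^ d * z ^ d ≤ x ^ (3*d) + y ^ (3*d) + z ^ (3*d) := by
  rw [rpow_three_mul hx, rpow_three_mul hy, rpow_three_mul hz]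
  have ha := Real.rpow_nonneg hx d
  have hb := Real.rpow_nonneg hy d
  have hc := Real.rpow_nonneg hz d
  set a := x ^ d
  set b := y ^ d
  set c := z ^ d
  nlinarith [mul_nonneg (add_nonneg (add_nonneg ha hb) hc) (sq_nonneg (a-b)),
    mul_nonneg (add_nonneg (add_nonneg ha hb) hc) (sq_nonneg (b-c)),
    mul_nonneg (add_nonneg (add_nonneg ha hb) hc) (sq_nonneg (a-c)),
    mul_nonneg (mul_nonneg ha hb) hc]

lemma one_le_two_rpow {e : ℝ} (he : 0 ≤ e) : (1:ℝ) ≤ 2 ^ e := by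
  calc (1:ℝ) = 2 ^ (0:ℝ) := by simp
  _ ≤ 2 ^ e := Real.rpow_le_rpow_of_exponent_le one_le_two he

lemma add_one_rpow_le {q e : ℝ} (hq : 0 ≤ q) (he : 0 ≤ e) :
    (q + 1) ^ e ≤ 2 ^ e * (q ^ e + 1) := by
  rcases le_total q 1 with h | h
  · calc (q+1)^e ≤ 2^e := Real.rpow_le_rpow (by linarith) (by linarith) he
      _ ≤ 2^e * (q^e+1) := le_mul_of_one_le_right
          (Real.rpow_nonneg (by norm_num) e) (by nlinarith [Real.rpow_nonneg hq e])
  · calc (q+1)^e ≤ (2*q)^e := Real.rpow_le_rpow (by linarith) (by linarith) he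
      _ = 2^e * q^e := Real.mul_rpow (by norm_num) hq
      _ ≤ 2^e * (q^e + 1) := by
          have u1 : (0:ℝ) ≤ 2^e := Real.rpow_nonneg (by norm_num) e
          have u2 : (0:ℝ) ≤ q^e := Real.rpow_nonneg hq e
          nlinarith

lemma add_rpow_le {u v e : ℝ} (hu : 0 ≤ u) (hv : 0 ≤ v) (he : 0 ≤ e) :
    (u + v) ^ e ≤ 2 ^ e * (u ^ e + v ^ e) := by
  have h2 := Real.rpow_nonneg (show (0:ℝ) ≤ 2 by norm_num) e
  rcases le_total u v with h | h
  · calc (u+v)^e ≤ (2*v)^e := Real.rpow_le_rpow (by linarith) (by linarith) he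
      _ = 2^e * v^e := Real.mul_rpow (by norm_num) hv
      _ ≤ _ := by nlinarith [Real.rpow_nonneg hu e]
  · calc (u+v)^e ≤ (2*u)^e := Real.rpow_le_rpow (by linarith) (by linarith) he
      _ = 2^e * u^e := Real.mul_rpow (by norm_num) hu
      _ ≤ _ := by nlinarith [Real.rpow_nonneg hv e]

lemma bound1 {q b d : ℝ} (hq : 0 ≤ q) (hd : 1 ≤ d) :
    |1/2 * (q - 1) * b| ^ d ≤ 2 ^ (2*d) * (q ^ (2*d) + 1 + |b| ^ (2*d)) := by
  have hd0 : (0:ℝ) ≤ d := by linarith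
  have habs : |q - 1| ≤ q + 1 := abs_le.mpr ⟨by linarith, by linarith⟩
  have h1 : |1/2 * (q - 1) * b| ≤ (q+1) * |b| := by
    rw [abs_mul, abs_mul, abs_of_pos (show (0:ℝ) < 1/2 by norm_num)]
    nlinarith [abs_nonneg b, abs_nonneg (q-1)]
  have h2 : (1:ℝ) ≤ 2 ^ (2*d) := one_le_two_rpow (by linarith)
  calc |1/2 * (q - 1) * b| ^ d ≤ ((q+1) * |b|) ^ d :=
        Real.rpow_le_rpow (abs_nonneg _) h1 hd0
    _ = (q+1)^d * |b|^d := Real.mul_rpow (by linarith) (abs_nonneg b)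
    _ ≤ (q+1)^(2*d) + |b| ^ (2*d) := prod2_le (by linarith) (abs_nonneg b)
    _ ≤ 2^(2*d) * (q^(2*d) + 1) + |b| ^ (2*d) := by
        nlinarith [add_one_rpow_le hq (show (0:ℝ) ≤ 2*d by linarith)]
    _ ≤ 2 ^ (2*d) * (q ^ (2*d) + 1 + |b| ^ (2*d)) := by
        nlinarith [Real.rpow_nonneg (abs_nonneg b) (2*d)]

lemma bound2 {q A B C d : ℝ} (hq : 0 ≤ q) (hd : 1 ≤ d) :
    |1/2 * ((q - 1) * A - (2*q - 1) * (B * C))| ^ d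
      ≤ 2 ^ (4*d) * (q ^ (2*d) + q ^ (3*d) + |B| ^ (3*d) + |C| ^ (3*d) + 2 + |A| ^ (2*d)) := by
  have hd0 : (0:ℝ) ≤ d := by linarith
  have h1 : |1/2 * ((q - 1) * A - (2*q - 1) * (B * C))| ≤ (q+1) * (|A| + |B| * |C|) := by
    have t1 : |(q-1) * A - (2*q-1) * (B*C)| ≤ |(q-1)*A| + |(2*q-1)*(B*C)| := by
      rw [sub_eq_add_neg]
      refine (abs_add_le _ _).trans ?_
      rw [abs_neg]
    rw [abs_mul, abs_of_pos (show (0:ℝ) < 1/2 by norm_num)]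
    have t2 : |(q-1)*A| ≤ (q+1) * |A| := by
      rw [abs_mul]
      exact mul_le_mul_of_nonneg_right (abs_le.mpr ⟨by linarith, by linarith⟩) (abs_nonneg _)
    have t3 : |(2*q-1)*(B*C)| ≤ (2*(q+1)) * (|B| * |C|) := by
      rw [abs_mul, abs_mul]
      exact mul_le_mul_of_nonneg_right (abs_le.mpr ⟨by linarith, by linarith⟩)
        (mul_nonneg (abs_nonneg _) (abs_nonneg _))
    nlinarith [abs_nonneg A, abs_nonneg B, abs_nonneg C,
      mul_nonneg (abs_nonneg B) (abs_nonneg C)]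
  have hq1 : (0:ℝ) ≤ q + 1 := by linarith
  have hAB : (0:ℝ) ≤ |A| + |B| * |C| :=
    add_nonneg (abs_nonneg _) (mul_nonneg (abs_nonneg _) (abs_nonneg _))
  have h2d : (0:ℝ) ≤ 2*d := by linarith
  have h3d : (0:ℝ) ≤ 3*d := by linarith
  have hK2 : (2:ℝ)^(2*d) ≤ 2^(3*d) := Real.rpow_le_rpow_of_exponent_le one_le_two (by linarith)
  have hK1 : (1:ℝ) ≤ 2^(3*d) := one_le_two_rpow h3d
  have hKpos : (0:ℝ) ≤ 2^(3*d) := by linarith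
  have e1 : (q+1)^(2*d) ≤ 2^(3*d) * (q^(2*d)+1) := by
    calc (q+1)^(2*d) ≤ 2^(2*d) * (q^(2*d)+1) := add_one_rpow_le hq h2d
      _ ≤ 2^(3*d) * (q^(2*d)+1) := by
          nlinarith [Real.rpow_nonneg hq (2*d)]
  have e2 : (q+1)^(3*d) ≤ 2^(3*d) * (q^(3*d)+1) := add_one_rpow_le hq h3d
  have pA := Real.rpow_nonneg (abs_nonneg A) (2*d)
  have pB := Real.rpow_nonneg (abs_nonneg B) (3*d)
  have pC := Real.rpow_nonneg (abs_nonneg C) (3*d)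
  have pq2 := Real.rpow_nonneg hq (2*d)
  have pq3 := Real.rpow_nonneg hq (3*d)
  calc |1/2 * ((q - 1) * A - (2*q - 1) * (B * C))| ^ d
      ≤ ((q+1) * (|A| + |B| * |C|)) ^ d := Real.rpow_le_rpow (abs_nonneg _) h1 hd0
    _ = (q+1)^d * (|A| + |B| * |C|)^d := Real.mul_rpow hq1 hAB
    _ ≤ (q+1)^d * (2^d * (|A| ^ d + (|B| * |C|) ^ d)) := by
        refine mul_le_mul_of_nonneg_left (add_rpow_le (abs_nonneg _)
          (mul_nonneg (abs_nonneg _) (abs_nonneg _)) hd0) (Real.rpow_nonneg hq1 d)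
    _ = 2^d * ((q+1)^d * |A| ^ d + (q+1)^d * (|B| ^ d * |C| ^ d)) := by
        rw [Real.mul_rpow (abs_nonneg B) (abs_nonneg C)]; ring
    _ ≤ 2^d * (((q+1)^(2*d) + |A| ^ (2*d)) + ((q+1)^(3*d) + |B| ^ (3*d) + |C| ^ (3*d))) := by
        have u1 := prod2_le hq1 (abs_nonneg A) (d := d)
        have u2 : (q+1)^d * (|B| ^ d * |C| ^ d) ≤ (q+1)^(3*d) + |B| ^ (3*d) + |C| ^ (3*d) := by
          have := prod3_le hq1 (abs_nonneg B) (abs_nonneg C) (d := d)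
          nlinarith
        have h2pos := Real.rpow_nonneg (show (0:ℝ) ≤ 2 by norm_num) d
        nlinarith
    _ ≤ 2^d * (2^(3*d) * (q ^ (2*d) + q ^ (3*d) + |B| ^ (3*d) + |C| ^ (3*d) + 2 + |A| ^ (2*d))) := by
        have h2pos := Real.rpow_nonneg (show (0:ℝ) ≤ 2 by norm_num) d
        have w1 : (1:ℝ) * |A| ^ (2*d) ≤ 2^(3*d) * |A| ^ (2*d) :=
          mul_le_mul_of_nonneg_right hK1 pA
        have w2 : (1:ℝ) * |B| ^ (3*d) ≤ 2^(3*d) * |B| ^ (3*d) :=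
          mul_le_mul_of_nonneg_right hK1 pB
        have w3 : (1:ℝ) * |C| ^ (3*d) ≤ 2^(3*d) * |C| ^ (3*d) :=
          mul_le_mul_of_nonneg_right hK1 pC
        nlinarith
    _ = 2 ^ (4*d) * (q ^ (2*d) + q ^ (3*d) + |B| ^ (3*d) + |C| ^ (3*d) + 2 + |A| ^ (2*d)) := by
        rw [← mul_assoc, ← Real.rpow_add (by norm_num : (0:ℝ) < 2)]
        ring_nf

section Deriv

variable {E : Type*} [NormedAddCommGroup E] [NormedSpace ℝ E]

lemma fderiv_l_apply {s : E → ℝ} {θ : E} (hs : DifferentiableAt ℝ s θ) (hpos : 0 < s θ)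
    (x : ℝ) (v : E) :
    fderiv ℝ (fun θ' => -(1 / 2) * (Real.log (s θ') + x / s θ')) θ v
      = 1/2 * (x / s θ - 1) * (fderiv ℝ s θ v / s θ) := by
  have hD : HasFDerivAt s (fderiv ℝ s θ) θ := hs.hasFDerivAt
  have hlog : HasFDerivAt (fun θ' => Real.log (s θ')) ((s θ)⁻¹ • fderiv ℝ s θ) θ :=
    hD.log hpos.ne'
  have hinv : HasFDerivAt (fun θ' => (s θ')⁻¹) (-((s θ ^ 2)⁻¹) • fderiv ℝ s θ) θ :=
    (hasDerivAt_inv hpos.ne').comp_hasFDerivAt θ hD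
  have hx : HasFDerivAt (fun θ' => x / s θ') (x • (-((s θ ^ 2)⁻¹) • fderiv ℝ s θ)) θ := by
    simpa [div_eq_mul_inv] using hinv.const_mul x
  have h : HasFDerivAt (fun θ' => -(1 / 2) * (Real.log (s θ') + x / s θ')) _ θ :=
    (hlog.add hx).const_mul (-(1/2 : ℝ))
  rw [h.fderiv]
  simp only [ContinuousLinearMap.smul_apply, ContinuousLinearMap.add_apply, smul_eq_mul,
    ContinuousLinearMap.neg_apply]
  have h0 : s θ ≠ 0 := hpos.ne'
  field_simp
  ring

lemma fderiv_g_apply {s φ : E → ℝ} {θ : E} (hs : DifferentiableAt ℝ s θ)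
    (hφ : DifferentiableAt ℝ φ θ) (hpos : 0 < s θ) (x : ℝ) (v : E) :
    fderiv ℝ (fun θ' => 1/2 * ((x / s θ' - 1) * (φ θ' / s θ'))) θ v
      = 1/2 * ((x / s θ - 1) * (fderiv ℝ φ θ v / s θ)
          - (2 * (x / s θ) - 1) * (fderiv ℝ s θ v / s θ * (φ θ / s θ))) := by
  have hD : HasFDerivAt s (fderiv ℝ s θ) θ := hs.hasFDerivAt
  have hΦ : HasFDerivAt φ (fderiv ℝ φ θ) θ := hφ.hasFDerivAt
  have hinv : HasFDerivAt (fun θ' => (s θ')⁻¹) (-((s θ ^ 2)⁻¹) • fderiv ℝ s θ) θ :=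
    (hasDerivAt_inv hpos.ne').comp_hasFDerivAt θ hD
  have hu : HasFDerivAt (fun θ' => x / s θ' - 1) (x • (-((s θ ^ 2)⁻¹) • fderiv ℝ s θ)) θ := by
    simpa [div_eq_mul_inv] using (hinv.const_mul x).sub_const 1
  have hw : HasFDerivAt (fun θ' => φ θ' / s θ')
      (φ θ • (-((s θ ^ 2)⁻¹) • fderiv ℝ s θ) + (s θ)⁻¹ • fderiv ℝ φ θ) θ := by
    have := hΦ.mul hinv
    simp only [div_eq_mul_inv]
    exact this
  have h : HasFDerivAt (fun θ' => 1/2 * ((x / s θ' - 1) * (φ θ' / s θ'))) _ θ :=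
    (hu.mul hw).const_mul (1/2 : ℝ)
  rw [h.fderiv]
  simp only [ContinuousLinearMap.smul_apply, ContinuousLinearMap.add_apply, smul_eq_mul,
    ContinuousLinearMap.neg_apply]
  have h0 : s θ ≠ 0 := hpos.ne'
  field_simp
  ring

end Deriv

lemma measurable_biSup_of_continuousOn {Ω : Type*} [MeasurableSpace Ω] {m : ℕ}
    {N : Set (Fin m → ℝ)} (hN : IsOpen N) (F : (Fin m → ℝ) → Ω → ℝ)
    (hmeas : ∀ θ, Measurable fun ω => F θ ω)
    (hcont : ∀ ω, ContinuousOn (fun θ => F θ ω) N) :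
    Measurable fun ω => ⨆ θ ∈ N, ENNReal.ofReal (F θ ω) := by
  obtain ⟨T, hTc, hTd⟩ := TopologicalSpace.exists_countable_dense (Fin m → ℝ)
  set D : Set (Fin m → ℝ) := N ∩ T with hDdef
  have hDc : D.Countable := hTc.mono Set.inter_subset_right
  have hDN : D ⊆ N := Set.inter_subset_left
  have hclos : N ⊆ closure D := hTd.open_subset_closure_inter hN
  have key : ∀ ω, (⨆ θ ∈ N, ENNReal.ofReal (F θ ω)) = ⨆ θ ∈ D, ENNReal.ofReal (F θ ω) := by
    intro ω
    refine le_antisymm ?_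
      (iSup₂_le fun θ hθ => le_biSup (f := fun θ => ENNReal.ofReal (F θ ω)) (hDN hθ))
    refine iSup₂_le fun θ hθ => ?_
    obtain ⟨u, hu, hlim⟩ := mem_closure_iff_seq_limit.1 (hclos hθ)
    have hmem : ∀ n, u n ∈ N := fun n => hDN (hu n)
    have htend : Tendsto (fun n => ENNReal.ofReal (F (u n) ω)) atTop
        (𝓝 (ENNReal.ofReal (F θ ω))) := by
      refine (ENNReal.continuous_ofReal.tendsto _).comp ?_
      have h1 : Tendsto u atTop (𝓝[N] θ) := by
        rw [tendsto_nhdsWithin_iff]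
        exact ⟨hlim, Eventually.of_forall hmem⟩
      exact ((hcont ω) θ hθ).tendsto.comp h1
    exact le_of_tendsto htend
      (Eventually.of_forall fun n => le_biSup (f := fun θ => ENNReal.ofReal (F θ ω)) (hu n))
  have hrw : (fun ω => ⨆ θ ∈ N, ENNReal.ofReal (F θ ω))
      = fun ω => ⨆ θ : D, ENNReal.ofReal (F θ ω) := by
    funext ω
    rw [key ω, iSup_subtype']
  rw [hrw]
  haveI := hDc.to_subtype
  exact Measurable.iSup fun θ => ENNReal.measurable_ofReal.comp (hmeas θ)

lemma ofReal_aux1 {t1 t2 c : ℝ} {T1 T2 : ℝ≥0∞}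
    (H1 : ENNReal.ofReal t1 ≤ T1) (H2 : ENNReal.ofReal t2 ≤ T2) (hc : 0 ≤ c) :
    ENNReal.ofReal (c * (t1 + 1 + t2)) ≤ ENNReal.ofReal c * (T1 + 1 + T2) := by
  rw [ENNReal.ofReal_mul hc]
  refine mul_le_mul_right ?_ _
  calc ENNReal.ofReal (t1 + 1 + t2) ≤ ENNReal.ofReal (t1 + 1) + ENNReal.ofReal t2 :=
        ENNReal.ofReal_add_le
    _ ≤ (ENNReal.ofReal t1 + ENNReal.ofReal 1) + ENNReal.ofReal t2 :=
        add_le_add_left ENNReal.ofReal_add_le _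
    _ ≤ T1 + 1 + T2 := by
        rw [ENNReal.ofReal_one]
        exact add_le_add (add_le_add H1 le_rfl) H2

lemma ofReal_aux2 {t1 t2 t3 t4 t5 c : ℝ} {T1 T2 T3 T4 T5 : ℝ≥0∞}
    (H1 : ENNReal.ofReal t1 ≤ T1) (H2 : ENNReal.ofReal t2 ≤ T2)
    (H3 : ENNReal.ofReal t3 ≤ T3) (H4 : ENNReal.ofReal t4 ≤ T4)
    (H5 : ENNReal.ofReal t5 ≤ T5) (hc : 0 ≤ c) :
    ENNReal.ofReal (c * (t1 + t2 + t3 + t4 + 2 + t5))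
      ≤ ENNReal.ofReal c * (T1 + T2 + T3 + T4 + 2 + T5) := by
  rw [ENNReal.ofReal_mul hc]
  refine mul_le_mul_right ?_ _
  have h2 : ENNReal.ofReal (2:ℝ) = 2 := by
    rw [show ((2:ℝ)) = ((2:ℕ):ℝ) by norm_num, ENNReal.ofReal_natCast]
    norm_num
  calc ENNReal.ofReal (t1 + t2 + t3 + t4 + 2 + t5)
      ≤ ENNReal.ofReal (t1 + t2 + t3 + t4 + 2) + ENNReal.ofReal t5 := ENNReal.ofReal_add_le
    _ ≤ (ENNReal.ofReal (t1 + t2 + t3 + t4) + ENNReal.ofReal 2) + ENNReal.ofReal t5 :=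
        add_le_add_left ENNReal.ofReal_add_le _
    _ ≤ ((ENNReal.ofReal (t1 + t2 + t3) + ENNReal.ofReal t4) + ENNReal.ofReal 2)
          + ENNReal.ofReal t5 := by
        exact add_le_add_left (add_le_add_left ENNReal.ofReal_add_le _) _
    _ ≤ (((ENNReal.ofReal (t1 + t2) + ENNReal.ofReal t3) + ENNReal.ofReal t4)
          + ENNReal.ofReal 2) + ENNReal.ofReal t5 := by
        exact add_le_add_left (add_le_add_left (add_le_add_left ENNReal.ofReal_add_le _) _) _
    _ ≤ ((((ENNReal.ofReal t1 + ENNReal.ofReal t2) + ENNReal.ofReal t3) + ENNReal.ofReal t4)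
          + ENNReal.ofReal 2) + ENNReal.ofReal t5 := by
        exact add_le_add_left (add_le_add_left (add_le_add_left
          (add_le_add_left ENNReal.ofReal_add_le _) _) _) _
    _ ≤ T1 + T2 + T3 + T4 + 2 + T5 := by
        rw [h2]
        exact add_le_add (add_le_add (add_le_add (add_le_add (add_le_add H1 H2) H3) H4) le_rfl) H5

end Stmt10Aux

open Stmt10Aux

/-- Lemma A.8 (conditional form): moments of the derivatives of the GARCH Gaussian
quasi-log-likelihood `l(θ) = -(1/2)(log S(θ) + X²/S(θ))`. If all moments
`E[sup_{θ∈N} (X²/S(θ))^d]`, `E[sup_{θ∈N} |∂ᵢS/S|^d]`, `E[sup_{θ∈N} |∂²ᵢⱼS/S|^d]` are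
finite for every `d ≥ 1`, then so are `E[sup_{θ∈N} |∂ᵢl|^d]` and
`E[sup_{θ∈N} |∂²ᵢⱼl|^d]`. -/
theorem stmt10 {Ω : Type*} [MeasurableSpace Ω] (P : Measure Ω) [IsProbabilityMeasure P]
    {m : ℕ} (N : Set (Fin m → ℝ)) (hN : IsOpen N)
    (X : Ω → ℝ) (hX : Measurable X)
    (S : (Fin m → ℝ) → Ω → ℝ)
    (hSsmooth : ∀ ω, ContDiffOn ℝ 2 (fun θ => S θ ω) N)
    (hSpos : ∀ ω, ∀ θ ∈ N, 0 < S θ ω)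
    (hSmeas : ∀ θ, Measurable (S θ))
    (hSmeas' : ∀ (θ : Fin m → ℝ) (i : Fin m),
      Measurable (fun ω => fderiv ℝ (fun θ' => S θ' ω) θ (Pi.single i 1)))
    (h1 : ∀ d : ℝ, 1 ≤ d →
      ∫⁻ ω, ⨆ θ ∈ N, ENNReal.ofReal ((X ω ^ 2 / S θ ω) ^ d) ∂P < ⊤)
    (h2 : ∀ d : ℝ, 1 ≤ d → ∀ i : Fin m,
      ∫⁻ ω, ⨆ θ ∈ N, ENNReal.ofReal
        (|fderiv ℝ (fun θ' => S θ' ω) θ (Pi.single i 1) / S θ ω| ^ d) ∂P < ⊤)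
    (h3 : ∀ d : ℝ, 1 ≤ d → ∀ i j : Fin m,
      ∫⁻ ω, ⨆ θ ∈ N, ENNReal.ofReal
        (|fderiv ℝ (fun θ' => fderiv ℝ (fun θ'' => S θ'' ω) θ' (Pi.single j 1)) θ
            (Pi.single i 1) / S θ ω| ^ d) ∂P < ⊤) :
    (∀ d : ℝ, 1 ≤ d → ∀ i : Fin m,
      ∫⁻ ω, ⨆ θ ∈ N, ENNReal.ofReal
        (|fderiv ℝ (fun θ' => -(1 / 2) * (Real.log (S θ' ω) + X ω ^ 2 / S θ' ω)) θ
            (Pi.single i 1)| ^ d) ∂P < ⊤) ∧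
    (∀ d : ℝ, 1 ≤ d → ∀ i j : Fin m,
      ∫⁻ ω, ⨆ θ ∈ N, ENNReal.ofReal
        (|fderiv ℝ (fun θ' =>
            fderiv ℝ (fun θ'' => -(1 / 2) * (Real.log (S θ'' ω) + X ω ^ 2 / S θ'' ω)) θ'
              (Pi.single j 1)) θ (Pi.single i 1)| ^ d) ∂P < ⊤) := by
  have hdiffAt : ∀ ω, ∀ θ' ∈ N, DifferentiableAt ℝ (fun θ'' => S θ'' ω) θ' := fun ω θ' hθ' =>
    ((hSsmooth ω).differentiableOn (by norm_num)).differentiableAt (hN.mem_nhds hθ')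
  constructor
  · -- first derivatives
    intro d hd i
    have h2d : (1:ℝ) ≤ 2*d := by linarith
    have h2d0 : (0:ℝ) ≤ 2*d := by linarith
    have hIntF1 := h1 (2*d) h2d
    have hIntF2 := h2 (2*d) h2d i
    have hmF1 : Measurable fun ω => ⨆ θ ∈ N, ENNReal.ofReal ((X ω ^ 2 / S θ ω) ^ (2*d)) := by
      refine measurable_biSup_of_continuousOn hN _ (fun θ => ?_) (fun ω => ?_)
      · exact (Real.continuous_rpow_const h2d0).measurable.comp
          ((hX.pow_const 2).div (hSmeas θ))
      · exact (continuousOn_const.div (hSsmooth ω).continuousOn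
          (fun θ hθ => (hSpos ω θ hθ).ne')).rpow_const (fun θ hθ => Or.inr h2d0)
    have hmF2 : Measurable fun ω => ⨆ θ ∈ N, ENNReal.ofReal
        (|fderiv ℝ (fun θ' => S θ' ω) θ (Pi.single i 1) / S θ ω| ^ (2*d)) := by
      refine measurable_biSup_of_continuousOn hN _ (fun θ => ?_) (fun ω => ?_)
      · exact (Real.continuous_rpow_const h2d0).measurable.comp
          (((hSmeas' θ i).div (hSmeas θ)).abs)
      · have hfc : ContinuousOn (fun θ => fderiv ℝ (fun θ' => S θ' ω) θ) N :=
          (hSsmooth ω).continuousOn_fderiv_of_isOpen hN (by norm_num)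
        have happ : ContinuousOn (fun θ => fderiv ℝ (fun θ' => S θ' ω) θ (Pi.single i 1)) N :=
          (ContinuousLinearMap.apply ℝ ℝ (Pi.single i 1)).continuous.comp_continuousOn hfc
        exact ((happ.div (hSsmooth ω).continuousOn
          (fun θ hθ => (hSpos ω θ hθ).ne')).abs).rpow_const (fun θ hθ => Or.inr h2d0)
    have hpt : ∀ ω, (⨆ θ ∈ N, ENNReal.ofReal
          (|fderiv ℝ (fun θ' => -(1 / 2) * (Real.log (S θ' ω) + X ω ^ 2 / S θ' ω)) θ
              (Pi.single i 1)| ^ d))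
        ≤ ENNReal.ofReal (2 ^ (2*d)) *
          ((⨆ θ ∈ N, ENNReal.ofReal ((X ω ^ 2 / S θ ω) ^ (2*d))) + 1
            + ⨆ θ ∈ N, ENNReal.ofReal
                (|fderiv ℝ (fun θ' => S θ' ω) θ (Pi.single i 1) / S θ ω| ^ (2*d))) := by
      intro ω
      refine iSup₂_le fun θ hθ => ?_
      have hpos := hSpos ω θ hθ
      rw [fderiv_l_apply (hdiffAt ω θ hθ) hpos (X ω ^ 2) (Pi.single i 1)]
      have hq : 0 ≤ X ω ^ 2 / S θ ω := div_nonneg (sq_nonneg _) hpos.le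
      refine le_trans (ENNReal.ofReal_le_ofReal (bound1 hq hd)) ?_
      exact ofReal_aux1
        (le_biSup (f := fun θ => ENNReal.ofReal ((X ω ^ 2 / S θ ω) ^ (2*d))) hθ)
        (le_biSup (f := fun θ => ENNReal.ofReal
          (|fderiv ℝ (fun θ' => S θ' ω) θ (Pi.single i 1) / S θ ω| ^ (2*d))) hθ)
        (Real.rpow_nonneg (by norm_num) _)
    refine lt_of_le_of_lt (lintegral_mono hpt) ?_
    rw [lintegral_const_mul' _ _ ENNReal.ofReal_ne_top,
      lintegral_add_left (hmF1.fun_add measurable_const) _, lintegral_add_left hmF1 _]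
    simp only [lintegral_const, measure_univ, mul_one]
    refine ENNReal.mul_lt_top ENNReal.ofReal_lt_top ?_
    exact ENNReal.add_lt_top.mpr ⟨ENNReal.add_lt_top.mpr ⟨hIntF1, ENNReal.one_lt_top⟩, hIntF2⟩
  · -- second derivatives
    intro d hd i j
    have h2d : (1:ℝ) ≤ 2*d := by linarith
    have h3d : (1:ℝ) ≤ 3*d := by linarith
    have h2d0 : (0:ℝ) ≤ 2*d := by linarith
    have h3d0 : (0:ℝ) ≤ 3*d := by linarith
    have hIntG1 := h1 (2*d) h2d
    have hIntG2 := h1 (3*d) h3d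
    have hIntG3 := h2 (3*d) h3d i
    have hIntG4 := h2 (3*d) h3d j
    have hIntG5 := h3 (2*d) h2d i j
    have hmq : ∀ e : ℝ, 0 ≤ e →
        Measurable fun ω => ⨆ θ ∈ N, ENNReal.ofReal ((X ω ^ 2 / S θ ω) ^ e) := by
      intro e he
      refine measurable_biSup_of_continuousOn hN _ (fun θ => ?_) (fun ω => ?_)
      · exact (Real.continuous_rpow_const he).measurable.comp
          ((hX.pow_const 2).div (hSmeas θ))
      · exact (continuousOn_const.div (hSsmooth ω).continuousOn
          (fun θ hθ => (hSpos ω θ hθ).ne')).rpow_const (fun θ hθ => Or.inr he)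
    have hmb : ∀ (e : ℝ), 0 ≤ e → ∀ (k : Fin m),
        Measurable fun ω => ⨆ θ ∈ N, ENNReal.ofReal
          (|fderiv ℝ (fun θ' => S θ' ω) θ (Pi.single k 1) / S θ ω| ^ e) := by
      intro e he k
      refine measurable_biSup_of_continuousOn hN _ (fun θ => ?_) (fun ω => ?_)
      · exact (Real.continuous_rpow_const he).measurable.comp
          (((hSmeas' θ k).div (hSmeas θ)).abs)
      · have hfc : ContinuousOn (fun θ => fderiv ℝ (fun θ' => S θ' ω) θ) N :=
          (hSsmooth ω).continuousOn_fderiv_of_isOpen hN (by norm_num)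
        have happ : ContinuousOn (fun θ => fderiv ℝ (fun θ' => S θ' ω) θ (Pi.single k 1)) N :=
          (ContinuousLinearMap.apply ℝ ℝ (Pi.single k 1)).continuous.comp_continuousOn hfc
        exact ((happ.div (hSsmooth ω).continuousOn
          (fun θ hθ => (hSpos ω θ hθ).ne')).abs).rpow_const (fun θ hθ => Or.inr he)
    have hmG1 := hmq (2*d) h2d0
    have hmG2 := hmq (3*d) h3d0
    have hmG3 := hmb (3*d) h3d0 i
    have hmG4 := hmb (3*d) h3d0 j
    have hpt : ∀ ω, (⨆ θ ∈ N, ENNReal.ofReal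
          (|fderiv ℝ (fun θ' =>
              fderiv ℝ (fun θ'' => -(1 / 2) * (Real.log (S θ'' ω) + X ω ^ 2 / S θ'' ω)) θ'
                (Pi.single j 1)) θ (Pi.single i 1)| ^ d))
        ≤ ENNReal.ofReal (2 ^ (4*d)) *
          ((⨆ θ ∈ N, ENNReal.ofReal ((X ω ^ 2 / S θ ω) ^ (2*d)))
            + (⨆ θ ∈ N, ENNReal.ofReal ((X ω ^ 2 / S θ ω) ^ (3*d)))
            + (⨆ θ ∈ N, ENNReal.ofReal
                (|fderiv ℝ (fun θ' => S θ' ω) θ (Pi.single i 1) / S θ ω| ^ (3*d)))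
            + (⨆ θ ∈ N, ENNReal.ofReal
                (|fderiv ℝ (fun θ' => S θ' ω) θ (Pi.single j 1) / S θ ω| ^ (3*d)))
            + 2
            + ⨆ θ ∈ N, ENNReal.ofReal
                (|fderiv ℝ (fun θ' => fderiv ℝ (fun θ'' => S θ'' ω) θ' (Pi.single j 1)) θ
                    (Pi.single i 1) / S θ ω| ^ (2*d))) := by
      intro ω
      refine iSup₂_le fun θ hθ => ?_
      have hpos := hSpos ω θ hθ
      have hev : (fun θ' => fderiv ℝ
            (fun θ'' => -(1 / 2) * (Real.log (S θ'' ω) + X ω ^ 2 / S θ'' ω)) θ'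
            (Pi.single j 1))
          =ᶠ[𝓝 θ] (fun θ' => 1/2 * ((X ω ^ 2 / S θ' ω - 1) *
            (fderiv ℝ (fun θ'' => S θ'' ω) θ' (Pi.single j 1) / S θ' ω))) := by
        filter_upwards [hN.mem_nhds hθ] with θ' hθ'
        rw [fderiv_l_apply (hdiffAt ω θ' hθ') (hSpos ω θ' hθ') (X ω ^ 2) (Pi.single j 1)]
        ring
      rw [hev.fderiv_eq]
      have hφ : DifferentiableAt ℝ
          (fun θ' => fderiv ℝ (fun θ'' => S θ'' ω) θ' (Pi.single j 1)) θ := by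
        have hC1 : ContDiffOn ℝ 1 (fderiv ℝ (fun θ'' => S θ'' ω)) N :=
          (hSsmooth ω).fderiv_of_isOpen hN (by norm_num)
        exact ((hC1.differentiableOn one_ne_zero).differentiableAt (hN.mem_nhds hθ)).clm_apply
          (differentiableAt_const _)
      rw [fderiv_g_apply (hdiffAt ω θ hθ) hφ hpos (X ω ^ 2) (Pi.single i 1)]
      have hq : 0 ≤ X ω ^ 2 / S θ ω := div_nonneg (sq_nonneg _) hpos.le
      refine le_trans (ENNReal.ofReal_le_ofReal (bound2 hq hd)) ?_
      exact ofReal_aux2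
        (le_biSup (f := fun θ => ENNReal.ofReal ((X ω ^ 2 / S θ ω) ^ (2*d))) hθ)
        (le_biSup (f := fun θ => ENNReal.ofReal ((X ω ^ 2 / S θ ω) ^ (3*d))) hθ)
        (le_biSup (f := fun θ => ENNReal.ofReal
          (|fderiv ℝ (fun θ' => S θ' ω) θ (Pi.single i 1) / S θ ω| ^ (3*d))) hθ)
        (le_biSup (f := fun θ => ENNReal.ofReal
          (|fderiv ℝ (fun θ' => S θ' ω) θ (Pi.single j 1) / S θ ω| ^ (3*d))) hθ)
        (le_biSup (f := fun θ => ENNReal.ofReal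
          (|fderiv ℝ (fun θ' => fderiv ℝ (fun θ'' => S θ'' ω) θ' (Pi.single j 1)) θ
              (Pi.single i 1) / S θ ω| ^ (2*d))) hθ)
        (Real.rpow_nonneg (by norm_num) _)
    refine lt_of_le_of_lt (lintegral_mono hpt) ?_
    rw [lintegral_const_mul' _ _ ENNReal.ofReal_ne_top,
      lintegral_add_left ((((hmG1.fun_add hmG2).fun_add hmG3).fun_add hmG4).fun_add measurable_const) _,
      lintegral_add_left (((hmG1.fun_add hmG2).fun_add hmG3).fun_add hmG4) _,
      lintegral_add_left ((hmG1.fun_add hmG2).fun_add hmG3) _,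
      lintegral_add_left (hmG1.fun_add hmG2) _,
      lintegral_add_left hmG1 _]
    simp only [lintegral_const, measure_univ, mul_one]
    refine ENNReal.mul_lt_top ENNReal.ofReal_lt_top ?_
    refine ENNReal.add_lt_top.mpr ⟨?_, hIntG5⟩
    refine ENNReal.add_lt_top.mpr ⟨?_, ENNReal.ofNat_lt_top⟩
    refine ENNReal.add_lt_top.mpr ⟨?_, hIntG4⟩
    refine ENNReal.add_lt_top.mpr ⟨?_, hIntG3⟩
    exact ENNReal.add_lt_top.mpr ⟨hIntG1, hIntG2⟩
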